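/- An [n,k]_{q^m/q} system 𝒰 is a linear cutting blocking set (meaning: for any two F_{q^m}-hyperplanes H, H' of F_{q^m}^k, 𝒰 ∩ H ⊆ 𝒰 ∩ H' implies H = H') if and only if for every F_{q^m}-hyperplane H of F_{q^m}^k, ⟨H ∩ 𝒰⟩_{F_{q^m}} = H. -/
import Mathlib

open Module Submodule

/-- The rank support of a vector `v ∈ L^n` over the subfield `K`: the `K`-span of the
rows of the expansion matrix, i.e. the space of all `(φ (v 1), ..., φ (v n))` for
`K`-linear functionals `φ : L → K`. -/
noncomputable def rkSupport (K : Type) {L : Type} [Field K] [Field L] [Algebra K L]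
    {n : ℕ} (v : Fin n → L) : Submodule K (Fin n → K) :=
  LinearMap.range (LinearMap.pi (fun i => LinearMap.applyₗ (v i) :
    Fin n → Module.Dual K L →ₗ[K] K))


theorem stmt_13 {K L : Type} [Field K] [Field L] [Algebra K L] {n k : ℕ} (hk : 1 ≤ k)
    (U : Submodule K (Fin k → L))
    (hU : Module.finrank K U = n)
    (hspan : Submodule.span L (U : Set (Fin k → L)) = ⊤) :
    (∀ H H' : Submodule L (Fin k → L),
       Module.finrank L H = k - 1 → Module.finrank L H' = k - 1 →
       (U : Set (Fin k → L)) ∩ (H : Set (Fin k → L)) ⊆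
         (U : Set (Fin k → L)) ∩ (H' : Set (Fin k → L)) → H = H') ↔
    (∀ H : Submodule L (Fin k → L), Module.finrank L H = k - 1 →
       Submodule.span L ((H : Set (Fin k → L)) ∩ (U : Set (Fin k → L))) = H) := by
  have hfin : Module.finrank L (Fin k → L) = k := by simp
  constructor
  · intro hcut H hH
    set W : Submodule L (Fin k → L) :=
      Submodule.span L ((H : Set (Fin k → L)) ∩ (U : Set (Fin k → L))) with hWdef
    have hWle : W ≤ H := Submodule.span_le.mpr Set.inter_subset_left
    by_contra hne
    have hWlt : W < H := lt_of_le_of_ne hWle hne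
    have hWr : Module.finrank L W < k - 1 := hH ▸ Submodule.finrank_lt_finrank_of_lt hWlt
    -- pick y ∉ H
    have hHne : H ≠ ⊤ := by
      intro h
      rw [h, finrank_top, hfin] at hH
      omega
    obtain ⟨y, hy⟩ : ∃ y, y ∉ H := by
      by_contra h
      push_neg at h
      exact hHne (Submodule.eq_top_iff'.mpr h)
    set W' : Submodule L (Fin k → L) := W ⊔ Submodule.span L {y} with hW'def
    have hW'r : Module.finrank L W' < k := by
      have h1 := Submodule.finrank_add_le_finrank_add_finrank W (Submodule.span L {y})
      have hy0 : y ≠ 0 := fun h => hy (h ▸ H.zero_mem)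
      have h2 : Module.finrank L (Submodule.span L ({y} : Set (Fin k → L))) = 1 :=
        finrank_span_singleton hy0
      rw [hW'def]
      omega
    have hW'lt : W' < ⊤ := by
      refine lt_of_le_of_ne le_top fun h => ?_
      rw [h, finrank_top, hfin] at hW'r
      omega
    obtain ⟨f, hf0, hfker⟩ := Submodule.exists_dual_map_eq_bot_of_lt_top hW'lt inferInstance
    have hker : W' ≤ LinearMap.ker f := by
      intro z hz
      have : f z ∈ W'.map f := Submodule.mem_map_of_mem hz
      rw [hfker] at this
      simpa using this
    have hkerrank : Module.finrank L (LinearMap.ker f) = k - 1 := by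
      have h1 := LinearMap.finrank_range_add_finrank_ker f
      have h2 : LinearMap.range f = ⊤ := by
        rcases LinearMap.surjective_of_ne_zero hf0 with hs
        exact LinearMap.range_eq_top.mpr hs
      rw [h2, finrank_top, hfin] at h1
      simp only [Module.finrank_self] at h1
      omega
    have hyker : y ∈ LinearMap.ker f :=
      hker (Submodule.mem_sup_right (Submodule.mem_span_singleton_self y))
    have hsub : (U : Set (Fin k → L)) ∩ (H : Set (Fin k → L)) ⊆
        (U : Set (Fin k → L)) ∩ ((LinearMap.ker f : Submodule L (Fin k → L)) : Set (Fin k → L)) := by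
      rintro z ⟨hzU, hzH⟩
      refine ⟨hzU, ?_⟩
      have : z ∈ W := Submodule.subset_span ⟨hzH, hzU⟩
      exact hker (Submodule.mem_sup_left this)
    have := hcut H (LinearMap.ker f) hH hkerrank hsub
    rw [← this] at hyker
    exact hy hyker
  · intro hsp H H' hH hH' hsub
    have h1 : Submodule.span L ((H : Set (Fin k → L)) ∩ (U : Set (Fin k → L))) = H := hsp H hH
    have h2 : H ≤ H' := by
      rw [← h1]
      refine Submodule.span_le.mpr ?_
      intro z hz
      have : z ∈ (U : Set (Fin k → L)) ∩ (H' : Set (Fin k → L)) := hsub ⟨hz.2, hz.1⟩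
      exact this.2
    exact Submodule.eq_of_le_of_finrank_eq h2 (by rw [hH, hH'])
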